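/- Let k be an odd integer and let N⊗ℤ_2 be the group with underlying set ℤ_2³ and multiplication (s,t,u)·(s',t',u') = (s+s', t+t', u+u'-ts'). Then the map (s,t,u) ↦ (-s+kt, -t, u + k·t(t-1)/2) is a well-defined automorphism of N⊗ℤ_2. -/
import Mathlib


/-- The Heisenberg-type group `N ⊗ R`: underlying set `R × R × R` with multiplication
`(s,t,u)·(s',t',u') = (s+s', t+t', u+u'-ts')`. -/
def Heis (R : Type*) [CommRing R] : Type _ := R × R × R

namespace Heis

variable {R : Type*} [CommRing R]

/-- Constructor for elements of `Heis R`. -/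
def mk (s t u : R) : Heis R := (s, t, u)

instance : Mul (Heis R) :=
  ⟨fun a b => (a.1 + b.1, a.2.1 + b.2.1, a.2.2 + b.2.2 - a.2.1 * b.1)⟩

instance : One (Heis R) := ⟨((0 : R), (0 : R), (0 : R))⟩

instance : Inv (Heis R) := ⟨fun a => (-a.1, -a.2.1, -a.2.2 - a.2.1 * a.1)⟩

instance instGroup : Group (Heis R) where
  mul_assoc a b c := by
    refine Prod.ext ?_ (Prod.ext ?_ ?_)
    · show a.1 + b.1 + c.1 = a.1 + (b.1 + c.1); ring
    · show a.2.1 + b.2.1 + c.2.1 = a.2.1 + (b.2.1 + c.2.1); ring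
    · show a.2.2 + b.2.2 - a.2.1 * b.1 + c.2.2 - (a.2.1 + b.2.1) * c.1 =
        a.2.2 + (b.2.2 + c.2.2 - b.2.1 * c.1) - a.2.1 * (b.1 + c.1)
      ring
  one_mul a := by
    refine Prod.ext ?_ (Prod.ext ?_ ?_)
    · show (0 : R) + a.1 = a.1; ring
    · show (0 : R) + a.2.1 = a.2.1; ring
    · show (0 : R) + a.2.2 - 0 * a.1 = a.2.2; ring
  mul_one a := by
    refine Prod.ext ?_ (Prod.ext ?_ ?_)
    · show a.1 + 0 = a.1; ring
    · show a.2.1 + 0 = a.2.1; ring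
    · show a.2.2 + 0 - a.2.1 * 0 = a.2.2; ring
  inv_mul_cancel a := by
    refine Prod.ext ?_ (Prod.ext ?_ ?_)
    · show -a.1 + a.1 = 0; ring
    · show -a.2.1 + a.2.1 = 0; ring
    · show -a.2.2 - a.2.1 * a.1 + a.2.2 - -a.2.1 * a.1 = 0; ring

end Heis


lemma two_dvd_mul_sub_one (t : ℤ_[2]) : (2 : ℤ_[2]) ∣ t * (t - 1) := by
  have h : (PadicInt.toZMod (t * (t - 1)) : ZMod 2) = 0 := by
    have : ∀ y : ZMod 2, y * (y - 1) = 0 := by decide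
    simpa using this (PadicInt.toZMod t)
  have := RingHom.mem_ker.2 h
  rw [PadicInt.ker_toZMod, PadicInt.maximalIdeal_eq_span_p, Ideal.mem_span_singleton] at this
  exact_mod_cast this

/-- `t(t-1)/2` in `ℤ_[2]`. -/
noncomputable def halfTT (t : ℤ_[2]) : ℤ_[2] := (two_dvd_mul_sub_one t).choose

lemma halfTT_spec (t : ℤ_[2]) : 2 * halfTT t = t * (t - 1) :=
  ((two_dvd_mul_sub_one t).choose_spec).symm

lemma twoNeZeroPadic : (2 : ℤ_[2]) ≠ 0 := by norm_num

lemma halfTT_unique {t h : ℤ_[2]} (hh : 2 * h = t * (t - 1)) : h = halfTT t :=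
  mul_left_cancel₀ twoNeZeroPadic (by rw [hh, halfTT_spec])

lemma halfTT_add (t t' : ℤ_[2]) : halfTT (t + t') = halfTT t + halfTT t' + t * t' := by
  refine (halfTT_unique ?_).symm
  have h1 := halfTT_spec t
  have h2 := halfTT_spec t'
  ring_nf
  ring_nf at h1 h2
  linear_combination h1 + h2

/-- For odd `k`, the map
`(s,t,u) ↦ (-s + k t, -t, u + k·t(t-1)/2)` is a well-defined automorphism of `N ⊗ ℤ₂`
(here `h = t(t-1)/2` is the unique 2-adic integer with `2h = t(t-1)`). -/
theorem stmt9 (k : ℤ) (hk : Odd k) :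
    ∃ f : Heis ℤ_[2] ≃* Heis ℤ_[2],
      ∀ s t u h : ℤ_[2], 2 * h = t * (t - 1) →
        f (Heis.mk s t u) = Heis.mk (-s + (k : ℤ_[2]) * t) (-t) (u + (k : ℤ_[2]) * h) := by
  set K : ℤ_[2] := (k : ℤ_[2]) with hK
  refine ⟨{ toFun := fun a => (-a.1 + K * a.2.1, -a.2.1, a.2.2 + K * halfTT a.2.1),
            invFun := fun a => (-a.1 - K * a.2.1, -a.2.1, a.2.2 - K * halfTT (-a.2.1)),
            left_inv := ?_, right_inv := ?_, map_mul' := ?_ }, ?_⟩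
  · intro a
    refine Prod.ext ?_ (Prod.ext ?_ ?_) <;> simp <;> ring
  · intro a
    refine Prod.ext ?_ (Prod.ext ?_ ?_) <;> simp <;> ring
  · intro a b
    refine Prod.ext ?_ (Prod.ext ?_ ?_)
    · show -(a.1 + b.1) + K * (a.2.1 + b.2.1) =
        (-a.1 + K * a.2.1) + (-b.1 + K * b.2.1); ring
    · show -(a.2.1 + b.2.1) = -a.2.1 + -b.2.1; ring
    · show (a.2.2 + b.2.2 - a.2.1 * b.1) + K * halfTT (a.2.1 + b.2.1) =
        (a.2.2 + K * halfTT a.2.1) + (b.2.2 + K * halfTT b.2.1) -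
          (-a.2.1) * (-b.1 + K * b.2.1)
      rw [halfTT_add]; ring
  · intro s t u h hh
    rw [halfTT_unique hh]
    rfl
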